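/- arXiv:0812.2659 — 2 statements merged into one kernel-verified Lean document; each statement's English description precedes it below -/
import Mathlib

section
/- Let V, W be subspaces of a finite-dimensional real inner product space with dim V ≤ dim W. Then tr(pr_V ∘ pr_W) = dim V if and only if V ⊆ W. -/
noncomputable def proj {E : Type*} [NormedAddCommGroup E] [InnerProductSpace ℝ E]
    (V : Submodule ℝ E) [V.HasOrthogonalProjection] : E →ₗ[ℝ] E :=
  V.subtype ∘ₗ (V.orthogonalProjectionOnto).toLinearMap

open Submodule in
open scoped RealInnerProductSpace in
theorem stmt_7 {E : Type*} [NormedAddCommGroup E] [InnerProductSpace ℝ E]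
    [FiniteDimensional ℝ E] (V W : Submodule ℝ E)
    (hdim : Module.finrank ℝ V ≤ Module.finrank ℝ W) :
    LinearMap.trace ℝ E (proj V ∘ₗ proj W) = (Module.finrank ℝ V : ℝ) ↔ V ≤ W := by
  classical
  set n := Module.finrank ℝ V with hn
  let b : OrthonormalBasis (Fin n) ℝ V := stdOrthonormalBasis ℝ V
  have hbnorm : ∀ i, ‖(b i : E)‖ = 1 := fun i => by
    exact b.orthonormal.1 i
  have htr : LinearMap.trace ℝ E (proj V ∘ₗ proj W)
      = ∑ i : Fin n, ‖(orthogonalProjection W ((b i : E)) : E)‖ ^ 2 := by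
    have h1 : proj V ∘ₗ proj W
        = V.subtype ∘ₗ ((orthogonalProjection V).toLinearMap ∘ₗ proj W) := by
      simp [proj, LinearMap.comp_assoc]
    rw [h1, LinearMap.trace_comp_comm']
    rw [LinearMap.trace_eq_matrix_trace ℝ b.toBasis, Matrix.trace]
    refine Finset.sum_congr rfl fun i _ => ?_
    rw [Matrix.diag_apply, LinearMap.toMatrix_apply, b.coe_toBasis_repr_apply,
      b.repr_apply_apply, b.coe_toBasis]
    simp only [LinearMap.comp_apply, Submodule.coe_subtype,
      ContinuousLinearMap.coe_coe, inner_orthogonalProjection_eq_of_mem_left]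
    rw [proj]
    simp only [LinearMap.comp_apply, Submodule.coe_subtype, ContinuousLinearMap.coe_coe]
    rw [real_inner_comm]
    rw [← inner_orthogonalProjection_eq_of_mem_left (K := W)
      (orthogonalProjection W ((b i : E))) ((b i : E))]
    rw [real_inner_self_eq_norm_sq]
    norm_cast
  have hle : ∀ i : Fin n, ‖(orthogonalProjection W ((b i : E)) : E)‖ ^ 2 ≤ 1 := by
    intro i
    have h := orthogonalProjectionFn_norm_sq W ((b i : E))
    rw [orthogonalProjectionFn_eq] at h
    have := hbnorm i
    nlinarith [norm_nonneg ((b i : E) - (orthogonalProjection W ((b i : E)) : E))]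
  rw [htr]
  constructor
  · intro hsum
    have hall : ∀ i ∈ Finset.univ, ‖(orthogonalProjection W ((b i : E)) : E)‖ ^ 2 = (1 : ℝ) := by
      refine (Finset.sum_eq_sum_iff_of_le fun i _ => hle i).1 ?_
      rw [hsum]; simp
    have hmem : ∀ i : Fin n, (b i : E) ∈ W := by
      intro i
      have h := orthogonalProjectionFn_norm_sq W ((b i : E))
      rw [orthogonalProjectionFn_eq] at h
      have h1 := hall i (Finset.mem_univ i)
      have h2 := hbnorm i
      have h3 : ‖(b i : E) - (orthogonalProjection W ((b i : E)) : E)‖ = 0 := by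
        nlinarith [norm_nonneg ((b i : E) - (orthogonalProjection W ((b i : E)) : E))]
      have h4 : (orthogonalProjection W ((b i : E)) : E) = (b i : E) :=
        (sub_eq_zero.mp (norm_eq_zero.mp h3)).symm
      rw [← h4]
      exact Submodule.coe_mem _
    intro x hx
    have hrepr := b.sum_repr' (⟨x, hx⟩ : V)
    have hxE := congrArg (V.subtype) hrepr
    simp only [map_sum, map_smul, Submodule.coe_subtype] at hxE
    rw [← hxE]
    exact Submodule.sum_mem _ fun i _ => Submodule.smul_mem _ _ (hmem i)
  · intro hVW
    have : ∀ i : Fin n, (orthogonalProjection W ((b i : E)) : E) = (b i : E) := fun i =>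
      (starProjection_eq_self_iff (K := W)).2 (hVW (Submodule.coe_mem (b i)))
    simp only [this]
    have : ∀ i : Fin n, ‖(b i : E)‖ ^ 2 = (1 : ℝ) := fun i => by rw [hbnorm i]; norm_num
    simp only [this]
    simp
end

section
/- Let Δ be a flag of subspaces V_s ⊆ V_{s−1} ⊆ … ⊆ V_1 of ℝ^n with dim V_i = a_i (so a_1 ≥ … ≥ a_s), and let Π_Δ = Σ_{i=1}^s pr_{V_i}. Then tr(Π_Δ ∘ Π_Δ) = Σ_{i=1}^s (2i−1)·a_i. -/
open Finset

lemma proj_isProj {E : Type*} [NormedAddCommGroup E] [InnerProductSpace ℝ E]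
    (V : Submodule ℝ E) [V.HasOrthogonalProjection] : LinearMap.IsProj V (proj V) := by
  constructor
  · intro x; exact SetLike.coe_mem _
  · intro x hx
    exact Submodule.starProjection_eq_self_iff.mpr hx

lemma proj_comp_proj {E : Type*} [NormedAddCommGroup E] [InnerProductSpace ℝ E]
    (V W : Submodule ℝ E) [V.HasOrthogonalProjection] [W.HasOrthogonalProjection]
    (h : W ≤ V) : proj V ∘ₗ proj W = proj W := by
  ext x
  exact Submodule.starProjection_eq_self_iff.mpr (h (SetLike.coe_mem _))

theorem stmt_8 (n s : ℕ) (V : Fin s → Submodule ℝ (EuclideanSpace ℝ (Fin n)))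
    (hflag : Antitone V) (a : Fin s → ℕ) (ha : ∀ i, Module.finrank ℝ (V i) = a i) :
    LinearMap.trace ℝ (EuclideanSpace ℝ (Fin n))
        ((∑ i : Fin s, proj (V i)) ∘ₗ (∑ i : Fin s, proj (V i)))
      = ∑ i : Fin s, (2 * (i : ℝ) + 1) * (a i : ℝ) := by
  have htr : ∀ i j : Fin s, LinearMap.trace ℝ (EuclideanSpace ℝ (Fin n))
      (proj (V i) ∘ₗ proj (V j)) = (a (max i j) : ℝ) := by
    intro i j
    rcases le_total j i with h | h
    · rw [LinearMap.trace_comp_comm', proj_comp_proj _ _ (hflag h),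
        (proj_isProj (V i)).trace, ha, max_eq_left h]
    · rw [proj_comp_proj _ _ (hflag h), (proj_isProj (V j)).trace, ha, max_eq_right h]
  rw [← Module.End.mul_eq_comp, Finset.sum_mul]
  simp_rw [Finset.mul_sum]
  rw [map_sum]
  simp_rw [map_sum, Module.End.mul_eq_comp, htr]
  -- now a pure combinatorial identity
  have key : ∀ i : Fin s, ∑ j : Fin s, (a (max i j) : ℝ)
      = ((i : ℕ) + 1) * (a i : ℝ) + ∑ j ∈ Finset.Ioi i, (a j : ℝ) := by
    intro i
    have : ∀ j : Fin s, (a (max i j) : ℝ) = if j ≤ i then (a i : ℝ) else (a j : ℝ) := by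
      intro j
      split
      · rw [max_eq_left ‹j ≤ i›]
      · rw [max_eq_right (le_of_lt (lt_of_not_ge ‹¬ j ≤ i›))]
    simp_rw [this]
    rw [Finset.sum_ite]
    have h1 : filter (fun x => x ≤ i) univ = Iic i := by ext x; simp
    have h2 : filter (fun x => ¬ x ≤ i) univ = Ioi i := by ext x; simp [not_le]
    rw [h1, h2, Finset.sum_const, Fin.card_Iic, nsmul_eq_mul]
    push_cast; ring
  simp_rw [key]
  rw [Finset.sum_add_distrib]
  have swap : ∑ i : Fin s, ∑ j ∈ Finset.Ioi i, (a j : ℝ)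
      = ∑ j : Fin s, ((j : ℕ) : ℝ) * (a j : ℝ) := by
    have h3 : ∀ i : Fin s, ∑ j ∈ Finset.Ioi i, (a j : ℝ)
        = ∑ j : Fin s, if i < j then (a j : ℝ) else 0 := by
      intro i
      rw [← Finset.sum_filter]
      congr 1
      ext x; simp
    simp_rw [h3]
    rw [Finset.sum_comm]
    have h4 : ∀ j : Fin s, ∑ i : Fin s, (if i < j then (a j : ℝ) else 0)
        = ((j : ℕ) : ℝ) * (a j : ℝ) := by
      intro j
      rw [← Finset.sum_filter]
      have : filter (fun i => i < j) univ = Iio j := by ext x; simp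
      rw [this, Finset.sum_const, Fin.card_Iio, nsmul_eq_mul]
    simp_rw [h4]
  rw [swap, ← Finset.sum_add_distrib]
  apply Finset.sum_congr rfl
  intro i _
  ring
end
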